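/- Fix positive integers m, n, p, a real δ ∈ (0,1), vectors L, U ∈ ℝ^p, and a matrix q ∈ [0,1]^{m×p} whose rows sum to 1. Let g : {1,…,m} → {1,…,p} be a random group assignment with independent labels and Pr[g(i) = ℓ] = q_{iℓ}. Then for every fixed x* ∈ {0,1}^m with ∑_{i=1}^m x*_i = n, with probability at least 1 − 2p·exp(−δ²n/3) over g, the following implication holds: if for all ℓ ∈ {1,…,p}, L_ℓ ≤ #{i : x*_i = 1 and g(i) = ℓ} ≤ U_ℓ, then for all ℓ ∈ {1,…,p}, L_ℓ − δn ≤ ∑_{i=1}^m q_{iℓ} x*_i ≤ U_ℓ + δn. -/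

import Mathlib

open MeasureTheory Finset

lemma exp_le_quad {x : ℝ} (hx : |x| ≤ 1) : Real.exp x ≤ 1 + x + 3/4 * x ^ 2 := by
  have h := Real.exp_bound hx (n := 2) (by norm_num)
  have h2 : |Real.exp x - (1 + x)| ≤ x ^ 2 * (3 / (2 * 2)) := by
    simpa [Finset.sum_range_succ, sq_abs] using h
  have := (abs_le.mp h2).2
  nlinarith

lemma chernoff_tail (m n p : ℕ) (δ : ℝ) (hδ : δ ∈ Set.Ioo (0:ℝ) 1)
    (q : Fin m → Fin p → ℝ) (hq : ∀ i ℓ, q i ℓ ∈ Set.Icc (0:ℝ) 1)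
    (hqsum : ∀ i, ∑ ℓ, q i ℓ = 1)
    (xstar : Fin m → ℝ) (hx01 : ∀ i, xstar i = 0 ∨ xstar i = 1)
    (hxsum : ∑ i, xstar i = (n:ℝ)) (ℓ₀ : Fin p) (s : ℝ) (hs : s = 1 ∨ s = -1) :
    ∑ g ∈ Finset.univ.filter (fun g : Fin m → Fin p =>
        δ * n < s * ((∑ i, if xstar i = 1 ∧ g i = ℓ₀ then (1:ℝ) else 0)
          - ∑ i, q i ℓ₀ * xstar i)),
      ∏ i, q i (g i) ≤ Real.exp (-(δ ^ 2 * n) / 3) := by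
  classical
  obtain ⟨hδ0, hδ1⟩ := hδ
  set lam : ℝ := 2 * δ / 3 with hlam
  have hlam0 : 0 < lam := by rw [hlam]; linarith
  have hlam1 : lam ≤ 1 := by rw [hlam]; linarith
  have hs2 : s ^ 2 = 1 := by rcases hs with h | h <;> rw [h] <;> norm_num
  have habs : |s| = 1 := by rcases hs with h | h <;> rw [h] <;> norm_num
  set μ : ℝ := ∑ i, q i ℓ₀ * xstar i with hμ
  set N : (Fin m → Fin p) → ℝ :=
    fun g => ∑ i, if xstar i = 1 ∧ g i = ℓ₀ then (1:ℝ) else 0 with hN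
  have hWnn : ∀ g : Fin m → Fin p, 0 ≤ ∏ i, q i (g i) :=
    fun g => Finset.prod_nonneg fun i _ => (hq i (g i)).1
  have hfac : ∀ i : Fin m,
      ∑ j, q i j * Real.exp (lam * s * (if xstar i = 1 ∧ j = ℓ₀ then (1:ℝ) else 0))
        ≤ Real.exp (lam * s * (q i ℓ₀ * xstar i) + 3/4 * lam ^ 2 * xstar i) := by
    intro i
    rcases hx01 i with h | h
    · have : ∀ j : Fin p, (xstar i = 1 ∧ j = ℓ₀) = False := by
        intro j; simp [h]
      simp only [this, if_false, mul_zero, Real.exp_zero, mul_one]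
      rw [hqsum i, h]
      simp
    · have hcond : ∀ j : Fin p, (xstar i = 1 ∧ j = ℓ₀) ↔ (j = ℓ₀) := by
        intro j; simp [h]
      have hexp : Real.exp (lam * s) - 1 ≤ lam * s + 3/4 * lam ^ 2 := by
        have habs' : |lam * s| ≤ 1 := by
          rw [abs_mul, habs, mul_one, abs_of_pos hlam0]; exact hlam1
        have := exp_le_quad habs'
        have hsq : (lam * s) ^ 2 = lam ^ 2 := by rw [mul_pow, hs2, mul_one]
        nlinarith
      have hterm : ∀ j : Fin p,
          q i j * Real.exp (lam * s * (if xstar i = 1 ∧ j = ℓ₀ then (1:ℝ) else 0))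
            = q i j + (if j = ℓ₀ then q i ℓ₀ * (Real.exp (lam * s) - 1) else 0) := by
        intro j
        by_cases hj : j = ℓ₀
        · subst hj
          rw [if_pos ((hcond j).mpr rfl), if_pos rfl, mul_one]
          ring
        · rw [if_neg (fun hc => hj ((hcond j).mp hc)), if_neg hj, mul_zero,
            Real.exp_zero, mul_one, add_zero]
      rw [Finset.sum_congr rfl fun j _ => hterm j, Finset.sum_add_distrib, hqsum i,
        Fintype.sum_ite_eq' ℓ₀ (fun _ => q i ℓ₀ * (Real.exp (lam * s) - 1))]
      have hq0 := (hq i ℓ₀).1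
      have hq1 := (hq i ℓ₀).2
      have h1 : 1 + q i ℓ₀ * (Real.exp (lam * s) - 1)
          ≤ 1 + (lam * s * (q i ℓ₀) + 3/4 * lam ^ 2) := by nlinarith
      have h2 := Real.add_one_le_exp (lam * s * (q i ℓ₀) + 3/4 * lam ^ 2)
      rw [h]
      rw [mul_one, mul_one]
      linarith
  calc ∑ g ∈ Finset.univ.filter (fun g : Fin m → Fin p => δ * n < s * (N g - μ)),
        ∏ i, q i (g i)
      ≤ ∑ g ∈ Finset.univ.filter (fun g : Fin m → Fin p => δ * n < s * (N g - μ)),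
        (∏ i, q i (g i)) * Real.exp (lam * (s * (N g - μ) - δ * n)) := by
        apply Finset.sum_le_sum
        intro g hg
        have := (Finset.mem_filter.mp hg).2
        exact le_mul_of_one_le_right (hWnn g)
          (Real.one_le_exp (by nlinarith))
    _ ≤ ∑ g : Fin m → Fin p,
        (∏ i, q i (g i)) * Real.exp (lam * (s * (N g - μ) - δ * n)) := by
        apply Finset.sum_le_sum_of_subset_of_nonneg (Finset.filter_subset _ _)
        intro g _ _
        exact mul_nonneg (hWnn g) (Real.exp_pos _).le
    _ = (∑ g : Fin m → Fin p, ∏ i,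
          (q i (g i) * Real.exp (lam * s * (if xstar i = 1 ∧ g i = ℓ₀ then (1:ℝ) else 0))))
        * Real.exp (-(lam * s * μ) - lam * δ * n) := by
        rw [Finset.sum_mul]
        apply Finset.sum_congr rfl
        intro g _
        rw [Finset.prod_mul_distrib, ← Real.exp_sum, ← Finset.mul_sum, mul_assoc,
          ← Real.exp_add]
        congr 1
        simp only [hN]
        ring_nf
    _ = (∏ i, ∑ j, q i j * Real.exp (lam * s * (if xstar i = 1 ∧ j = ℓ₀ then (1:ℝ) else 0)))
        * Real.exp (-(lam * s * μ) - lam * δ * n) := by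
        rw [Fintype.prod_sum]
    _ ≤ (∏ i, Real.exp (lam * s * (q i ℓ₀ * xstar i) + 3/4 * lam ^ 2 * xstar i))
        * Real.exp (-(lam * s * μ) - lam * δ * n) := by
        apply mul_le_mul_of_nonneg_right _ (Real.exp_pos _).le
        apply Finset.prod_le_prod
        · intro i _
          exact Finset.sum_nonneg fun j _ => mul_nonneg (hq i j).1 (Real.exp_pos _).le
        · intro i _
          exact hfac i
    _ = Real.exp ((lam * s * μ + 3/4 * lam ^ 2 * n) + (-(lam * s * μ) - lam * δ * n)) := by
        rw [← Real.exp_sum, ← Real.exp_add]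
        congr 1
        rw [Finset.sum_add_distrib]
        rw [← Finset.mul_sum, ← Finset.mul_sum, hxsum]
    _ ≤ Real.exp (-(δ ^ 2 * n) / 3) := by
        apply Real.exp_le_exp.mpr
        apply le_of_eq
        rw [hlam]
        ring

theorem stmt11 (m n p : ℕ) (hm : 0 < m) (hn : 0 < n) (hp : 0 < p)
    (δ : ℝ) (hδ : δ ∈ Set.Ioo (0 : ℝ) 1)
    (L U : Fin p → ℝ)
    (q : Fin m → Fin p → ℝ) (hq : ∀ i ℓ, q i ℓ ∈ Set.Icc (0 : ℝ) 1)
    (hqsum : ∀ i, ∑ ℓ, q i ℓ = 1)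
    (ν : Fin m → Measure (Fin p)) [∀ i, IsProbabilityMeasure (ν i)]
    (hνq : ∀ i ℓ, ν i {ℓ} = ENNReal.ofReal (q i ℓ))
    (xstar : Fin m → ℝ) (hxstar01 : ∀ i, xstar i = 0 ∨ xstar i = 1)
    (hxstarsum : ∑ i, xstar i = (n : ℝ)) :
    ENNReal.ofReal (1 - 2 * p * Real.exp (-(δ ^ 2 * n) / 3)) ≤
      Measure.pi ν {g |
        (∀ ℓ, L ℓ ≤ (({i | xstar i = 1 ∧ g i = ℓ} : Set (Fin m)).ncard : ℝ) ∧
            (({i | xstar i = 1 ∧ g i = ℓ} : Set (Fin m)).ncard : ℝ) ≤ U ℓ) →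
        ∀ ℓ, L ℓ - δ * n ≤ ∑ i, q i ℓ * xstar i ∧
          ∑ i, q i ℓ * xstar i ≤ U ℓ + δ * n} := by
  classical
  obtain ⟨hδ0, hδ1⟩ := hδ
  have hExpNN : (0:ℝ) ≤ 2 * p * Real.exp (-(δ ^ 2 * n) / 3) := by positivity
  set A : Set (Fin m → Fin p) := {g |
        (∀ ℓ, L ℓ ≤ (({i | xstar i = 1 ∧ g i = ℓ} : Set (Fin m)).ncard : ℝ) ∧
            (({i | xstar i = 1 ∧ g i = ℓ} : Set (Fin m)).ncard : ℝ) ≤ U ℓ) →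
        ∀ ℓ, L ℓ - δ * n ≤ ∑ i, q i ℓ * xstar i ∧
          ∑ i, q i ℓ * xstar i ≤ U ℓ + δ * n} with hA
  have hNcard : ∀ (g : Fin m → Fin p) (ℓ : Fin p),
      (({i | xstar i = 1 ∧ g i = ℓ} : Set (Fin m)).ncard : ℝ)
        = ∑ i, if xstar i = 1 ∧ g i = ℓ then (1:ℝ) else 0 := by
    intro g ℓ
    rw [Set.ncard_eq_toFinset_card', Set.toFinset_setOf, Finset.card_filter]
    push_cast
    rfl
  by_cases hD : ∀ ℓ, L ℓ - δ * n ≤ ∑ i, q i ℓ * xstar i ∧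
      ∑ i, q i ℓ * xstar i ≤ U ℓ + δ * n
  · have hU : A = Set.univ := Set.eq_univ_of_forall fun g _ => hD
    rw [hU, measure_univ]
    exact ENNReal.ofReal_le_one.mpr (by linarith)
  · rw [not_forall] at hD
    obtain ⟨ℓ₀, hℓ₀⟩ := hD
    rw [not_and_or, not_le, not_le] at hℓ₀
    obtain ⟨s, hs, hTail⟩ : ∃ s : ℝ, (s = 1 ∨ s = -1) ∧
        ∀ g : Fin m → Fin p,
          (∀ ℓ, L ℓ ≤ (({i | xstar i = 1 ∧ g i = ℓ} : Set (Fin m)).ncard : ℝ) ∧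
              (({i | xstar i = 1 ∧ g i = ℓ} : Set (Fin m)).ncard : ℝ) ≤ U ℓ) →
          δ * n < s * ((∑ i, if xstar i = 1 ∧ g i = ℓ₀ then (1:ℝ) else 0)
            - ∑ i, q i ℓ₀ * xstar i) := by
      rcases hℓ₀ with h | h
      · refine ⟨1, Or.inl rfl, fun g hg => ?_⟩
        have h1 := (hg ℓ₀).1
        rw [hNcard g ℓ₀] at h1
        rw [one_mul]
        linarith
      · refine ⟨-1, Or.inr rfl, fun g hg => ?_⟩
        have h1 := (hg ℓ₀).2
        rw [hNcard g ℓ₀] at h1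
        rw [neg_one_mul]
        linarith
    have hsub : Aᶜ ⊆ {g : Fin m → Fin p |
        δ * n < s * ((∑ i, if xstar i = 1 ∧ g i = ℓ₀ then (1:ℝ) else 0)
          - ∑ i, q i ℓ₀ * xstar i)} := by
      intro g hg
      rw [Set.mem_compl_iff, hA, Set.mem_setOf_eq] at hg
      push_neg at hg
      exact hTail g hg.1
    have hTmeas : Measure.pi ν {g : Fin m → Fin p |
        δ * n < s * ((∑ i, if xstar i = 1 ∧ g i = ℓ₀ then (1:ℝ) else 0)
          - ∑ i, q i ℓ₀ * xstar i)} ≤ ENNReal.ofReal (Real.exp (-(δ ^ 2 * n) / 3)) := by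
      set P : (Fin m → Fin p) → Prop := fun g =>
        δ * n < s * ((∑ i, if xstar i = 1 ∧ g i = ℓ₀ then (1:ℝ) else 0)
          - ∑ i, q i ℓ₀ * xstar i) with hP
      have hsub2 : {g : Fin m → Fin p | P g}
          ⊆ ⋃ g ∈ Finset.univ.filter P, ({g} : Set (Fin m → Fin p)) := by
        intro g hg
        simp only [Set.mem_iUnion, Set.mem_singleton_iff]
        exact ⟨g, by simpa using hg, rfl⟩
      calc Measure.pi ν {g : Fin m → Fin p | P g}
          ≤ ∑ g ∈ Finset.univ.filter P, Measure.pi ν ({g} : Set (Fin m → Fin p)) :=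
            le_trans (measure_mono hsub2) (measure_biUnion_finset_le _ _)
        _ = ∑ g ∈ Finset.univ.filter P, ENNReal.ofReal (∏ i, q i (g i)) := by
            apply Finset.sum_congr rfl
            intro g _
            rw [← Set.univ_pi_singleton, Measure.pi_pi,
              Finset.prod_congr rfl fun i _ => hνq i (g i)]
            exact (ENNReal.ofReal_prod_of_nonneg fun i _ => (hq i (g i)).1).symm
        _ = ENNReal.ofReal (∑ g ∈ Finset.univ.filter P, ∏ i, q i (g i)) :=
            (ENNReal.ofReal_sum_of_nonneg fun g _ =>
              Finset.prod_nonneg fun i _ => (hq i (g i)).1).symm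
        _ ≤ ENNReal.ofReal (Real.exp (-(δ ^ 2 * n) / 3)) :=
            ENNReal.ofReal_le_ofReal
              (chernoff_tail m n p δ ⟨hδ0, hδ1⟩ q hq hqsum xstar hxstar01 hxstarsum ℓ₀ s hs)
    have hcompl : Measure.pi ν Aᶜ
        ≤ ENNReal.ofReal (2 * p * Real.exp (-(δ ^ 2 * n) / 3)) := by
      refine le_trans (le_trans (measure_mono hsub) hTmeas) (ENNReal.ofReal_le_ofReal ?_)
      have hp1 : (1:ℝ) ≤ (p:ℝ) := by exact_mod_cast hp
      nlinarith [Real.exp_pos (-(δ ^ 2 * n) / 3)]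
    calc ENNReal.ofReal (1 - 2 * p * Real.exp (-(δ ^ 2 * n) / 3))
        = 1 - ENNReal.ofReal (2 * p * Real.exp (-(δ ^ 2 * n) / 3)) := by
          rw [ENNReal.ofReal_sub _ hExpNN, ENNReal.ofReal_one]
      _ ≤ 1 - Measure.pi ν Aᶜ := tsub_le_tsub_left hcompl 1
      _ ≤ Measure.pi ν A := by
          rw [tsub_le_iff_right]
          have huni := measure_union_le (μ := Measure.pi ν) A Aᶜ
          rw [Set.union_compl_self, measure_univ] at huni
          exact huni
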